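/- Let A be real symmetric with smallest eigenvalue λ_{T-1}, and d ∈ ℝ^{T-1} nonzero with nonzero component along the eigenvector of λ_{T-1}. Then the map ν ↦ ‖(A + 2νI)⁻¹ d‖² is strictly monotonically decreasing on (-λ_{T-1}/2, +∞), tends to +∞ as ν → (-λ_{T-1}/2)⁺, and tends to 0 as ν → +∞; hence for any γ > 0 there is a unique ν in this interval with ‖(A+2νI)⁻¹d‖² = γ. -/

import Mathlib

open Matrix Set Filter Topology

lemma vmv_mul {n : ℕ} (a b c e : Fin n → ℝ) :
    vecMulVec a b * vecMulVec c e = (b ⬝ᵥ c) • vecMulVec a e := by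
  ext i j
  simp only [Matrix.mul_apply, Matrix.vecMulVec_apply, Matrix.smul_apply, dotProduct,
    smul_eq_mul, Finset.sum_mul]
  exact Finset.sum_congr rfl fun k _ => by ring

lemma vmv_mulVec {n : ℕ} (a b d : Fin n → ℝ) :
    (vecMulVec a b).mulVec d = (b ⬝ᵥ d) • a := by
  ext i
  simp only [Matrix.mulVec, dotProduct, Matrix.vecMulVec_apply, Pi.smul_apply, smul_eq_mul,
    Finset.sum_mul]
  exact Finset.sum_congr rfl fun k _ => by ring

lemma mat_sum_mulVec {n : ℕ} (M : Fin n → Matrix (Fin n) (Fin n) ℝ) (d : Fin n → ℝ) :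
    (∑ i, M i) *ᵥ d = ∑ i, (M i) *ᵥ d := by
  ext j
  simp only [Matrix.mulVec, dotProduct, Matrix.sum_apply, Finset.sum_apply, Finset.sum_mul]
  exact Finset.sum_comm

lemma sum_outer {n : ℕ} (v : Fin n → Fin n → ℝ)
    (horth : ∀ i j, v i ⬝ᵥ v j = if i = j then (1:ℝ) else 0) :
    ∑ i, vecMulVec (v i) (v i) = (1 : Matrix (Fin n) (Fin n) ℝ) := by
  have h1 : (Matrix.of v) * (Matrix.of v)ᵀ = 1 := by
    ext i j
    simp only [Matrix.mul_apply, Matrix.transpose_apply, Matrix.of_apply, Matrix.one_apply]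
    simpa [dotProduct] using horth i j
  have h2 : (Matrix.of v)ᵀ * (Matrix.of v) = 1 := mul_eq_one_comm.mp h1
  ext j k
  have := congrFun (congrFun h2 j) k
  simp only [Matrix.mul_apply, Matrix.transpose_apply, Matrix.of_apply] at this
  simp only [Finset.sum_apply, Matrix.sum_apply, Matrix.vecMulVec_apply]
  rw [← this]

lemma inv_formula {n : ℕ} {A : Matrix (Fin n) (Fin n) ℝ} {lam : Fin n → ℝ}
    {v : Fin n → Fin n → ℝ}
    (horth : ∀ i j, v i ⬝ᵥ v j = if i = j then (1:ℝ) else 0)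
    (hdecomp : A = ∑ i, lam i • Matrix.vecMulVec (v i) (v i))
    (ν : ℝ) (hpos : ∀ i, lam i + 2*ν ≠ 0) :
    (A + (2*ν) • (1 : Matrix (Fin n) (Fin n) ℝ))⁻¹
      = ∑ i, (lam i + 2*ν)⁻¹ • vecMulVec (v i) (v i) := by
  apply Matrix.inv_eq_right_inv
  have hA2 : A + (2*ν) • (1 : Matrix (Fin n) (Fin n) ℝ)
      = ∑ i, (lam i + 2*ν) • vecMulVec (v i) (v i) := by
    rw [hdecomp, ← sum_outer v horth, Finset.smul_sum, ← Finset.sum_add_distrib]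
    exact Finset.sum_congr rfl fun i _ => by rw [add_smul]
  rw [hA2, Finset.sum_mul_sum]
  have key : ∀ i j : Fin n, ((lam i + 2*ν) • vecMulVec (v i) (v i)) *
      ((lam j + 2*ν)⁻¹ • vecMulVec (v j) (v j))
      = ((lam i + 2*ν) * ((lam j + 2*ν)⁻¹ * (if i = j then (1:ℝ) else 0))) •
          vecMulVec (v i) (v j) := by
    intro i j
    rw [smul_mul_assoc, mul_smul_comm, vmv_mul, horth i j, smul_smul, smul_smul, mul_assoc]
  simp_rw [key]
  rw [← sum_outer v horth]
  refine Finset.sum_congr rfl fun i _ => ?_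
  rw [Finset.sum_eq_single i]
  · rw [if_pos rfl, mul_one, mul_inv_cancel₀ (hpos i), one_smul]
  · intro j _ hj
    rw [if_neg (Ne.symm hj), mul_zero, mul_zero, zero_smul]
  · intro h; exact absurd (Finset.mem_univ i) h

lemma p_formula {n : ℕ} {A : Matrix (Fin n) (Fin n) ℝ} {lam : Fin n → ℝ}
    {v : Fin n → Fin n → ℝ}
    (horth : ∀ i j, v i ⬝ᵥ v j = if i = j then (1:ℝ) else 0)
    (hdecomp : A = ∑ i, lam i • Matrix.vecMulVec (v i) (v i))
    (d : Fin n → ℝ) (ν : ℝ) (hpos : ∀ i, lam i + 2*ν ≠ 0) :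
    ∑ j, (((A + (2*ν) • (1 : Matrix (Fin n) (Fin n) ℝ))⁻¹.mulVec d) j)^2
      = ∑ i, (v i ⬝ᵥ d)^2 / (lam i + 2*ν)^2 := by
  rw [inv_formula horth hdecomp ν hpos]
  set c : Fin n → ℝ := fun i => (lam i + 2*ν)⁻¹ * (v i ⬝ᵥ d) with hc
  have hmv : (∑ i, (lam i + 2*ν)⁻¹ • vecMulVec (v i) (v i)).mulVec d
      = fun j => ∑ i, c i * v i j := by
    rw [mat_sum_mulVec]
    ext j
    simp only [Finset.sum_apply]
    refine Finset.sum_congr rfl fun i _ => ?_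
    rw [smul_mulVec, vmv_mulVec]
    simp [hc, mul_assoc]
  rw [hmv]
  have expand : ∑ j, (∑ i, c i * v i j)^2 = ∑ i, ∑ k, (c i * c k) * (v i ⬝ᵥ v k) := by
    simp_rw [sq, Finset.sum_mul_sum, dotProduct, Finset.mul_sum]
    rw [Finset.sum_comm]
    refine Finset.sum_congr rfl fun i _ => ?_
    rw [Finset.sum_comm]
    refine Finset.sum_congr rfl fun k _ => Finset.sum_congr rfl fun j _ => by ring
  rw [expand]
  refine Finset.sum_congr rfl fun i _ => ?_
  rw [Finset.sum_eq_single i]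
  · rw [horth i i, if_pos rfl, mul_one, hc]
    field_simp
  · intro k _ hk
    rw [horth i k, if_neg (Ne.symm hk), mul_zero]
  · intro h; exact absurd (Finset.mem_univ i) h

/-- Mirror statement on the interval (-λ_{T-1}/2, +∞), where
λ_{T-1} is the smallest eigenvalue: the map ν ↦ ‖(A+2νI)⁻¹d‖² is strictly
decreasing, tends to +∞ at the left endpoint and to 0 at +∞; hence for any
γ > 0 there is a unique ν in this interval attaining γ. -/
theorem stmt2 (n : ℕ) (hn : 0 < n)
    (A : Matrix (Fin n) (Fin n) ℝ) (hA : A.IsSymm)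
    (lam : Fin n → ℝ) (v : Fin n → Fin n → ℝ)
    (horth : ∀ i j, v i ⬝ᵥ v j = if i = j then (1:ℝ) else 0)
    (hdecomp : A = ∑ i, lam i • Matrix.vecMulVec (v i) (v i))
    (hdesc : Antitone lam)
    (d : Fin n → ℝ) (hd : d ≠ 0)
    (hd1 : ∃ i, lam i = lam ⟨n-1, by omega⟩ ∧ v i ⬝ᵥ d ≠ 0)
    (p : ℝ → ℝ)
    (hp : ∀ ν, p ν = ∑ j, (((A + (2*ν) • (1 : Matrix (Fin n) (Fin n) ℝ))⁻¹.mulVec d) j)^2) :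
    StrictAntiOn p (Set.Ioi (-(lam ⟨n-1, by omega⟩)/2)) ∧
    Tendsto p (𝓝[>] (-(lam ⟨n-1, by omega⟩)/2)) atTop ∧
    Tendsto p atTop (𝓝 0) ∧
    ∀ γ : ℝ, 0 < γ → ∃! ν : ℝ, -(lam ⟨n-1, by omega⟩)/2 < ν ∧ p ν = γ := by
  have hn1 : n - 1 < n := by omega
  set L : ℝ := lam ⟨n-1, hn1⟩ with hLdef
  have hmin : ∀ i : Fin n, L ≤ lam i := by
    intro i
    exact hdesc (show i ≤ ⟨n-1, hn1⟩ from Fin.le_def.mpr (show i.val ≤ n - 1 by omega))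
  have hpos : ∀ ν : ℝ, -L/2 < ν → ∀ i, 0 < lam i + 2*ν := by
    intro ν hν i
    have := hmin i; nlinarith
  set q : ℝ → ℝ := fun ν => ∑ i, (v i ⬝ᵥ d)^2 / (lam i + 2*ν)^2 with hqdef
  have hpq : ∀ ν : ℝ, -L/2 < ν → p ν = q ν := by
    intro ν hν
    rw [hp ν, p_formula horth hdecomp d ν (fun i => (hpos ν hν i).ne')]
  obtain ⟨iw, hiw1, hiw2⟩ := hd1
  have hiwL : lam iw = L := hiw1
  have hcw : 0 < (v iw ⬝ᵥ d)^2 := by positivity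
  -- Part 1
  have hanti : StrictAntiOn p (Set.Ioi (-L/2)) := by
    intro a ha b hb hab
    rw [Set.mem_Ioi] at ha hb
    rw [hpq a ha, hpq b hb]
    refine Finset.sum_lt_sum (fun i _ => ?_) ⟨iw, Finset.mem_univ iw, ?_⟩
    · have h1 := hpos a ha i
      have h2 := hpos b hb i
      exact div_le_div_of_nonneg_left (sq_nonneg _) (by positivity) (by nlinarith)
    · have h1 := hpos a ha iw
      have h2 := hpos b hb iw
      exact div_lt_div_of_pos_left hcw (by positivity) (by nlinarith)
  -- Part 2
  have h2 : Tendsto p (𝓝[>] (-L/2)) atTop := by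
    have hg : Tendsto (fun ν : ℝ => (L + 2*ν)^2) (𝓝[>] (-L/2)) (𝓝[>] (0:ℝ)) := by
      rw [tendsto_nhdsWithin_iff]
      constructor
      · have hcont : Tendsto (fun ν : ℝ => (L + 2*ν)^2) (𝓝 (-L/2)) (𝓝 ((L + 2*(-L/2))^2)) := by
          apply Continuous.tendsto; fun_prop
        have h0 : (L + 2*(-L/2))^2 = (0:ℝ) := by ring
        rw [h0] at hcont
        exact hcont.mono_left nhdsWithin_le_nhds
      · filter_upwards [self_mem_nhdsWithin] with ν hν
        rw [Set.mem_Ioi] at hν ⊢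
        have := hpos ν hν ⟨n-1, hn1⟩
        rw [← hLdef] at this
        positivity
    have hterm : Tendsto (fun ν : ℝ => (v iw ⬝ᵥ d)^2 / (L + 2*ν)^2) (𝓝[>] (-L/2)) atTop := by
      simp_rw [div_eq_mul_inv]
      exact Tendsto.const_mul_atTop hcw (tendsto_inv_nhdsGT_zero.comp hg)
    apply tendsto_atTop_mono' _ _ hterm
    filter_upwards [self_mem_nhdsWithin] with ν hν
    rw [Set.mem_Ioi] at hν
    rw [hpq ν hν]
    calc (v iw ⬝ᵥ d)^2/(L+2*ν)^2 = (v iw ⬝ᵥ d)^2/(lam iw+2*ν)^2 := by rw [hiwL]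
    _ ≤ q ν := show _ ≤ ∑ i, (v i ⬝ᵥ d)^2 / (lam i + 2*ν)^2 from
        Finset.single_le_sum (f := fun i => (v i ⬝ᵥ d)^2 / (lam i + 2*ν)^2)
          (fun i _ => by positivity) (Finset.mem_univ iw)
  -- Part 3
  have h3 : Tendsto p atTop (𝓝 0) := by
    have hq0 : Tendsto q atTop (𝓝 0) := by
      have hsum : Tendsto (fun ν : ℝ => ∑ i : Fin n, (v i ⬝ᵥ d)^2/(lam i + 2*ν)^2)
          atTop (𝓝 (∑ _i : Fin n, (0:ℝ))) := by
        apply tendsto_finset_sum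
        intro i _
        apply Tendsto.div_atTop tendsto_const_nhds
        have hlin : Tendsto (fun ν : ℝ => lam i + 2*ν) atTop atTop :=
          tendsto_atTop_add_const_left _ _ (Tendsto.const_mul_atTop two_pos tendsto_id)
        have := hlin.atTop_mul_atTop₀ hlin
        simpa [sq] using this
      simpa using hsum
    apply Tendsto.congr' _ hq0
    filter_upwards [eventually_gt_atTop (-L/2)] with ν hν
    exact (hpq ν hν).symm
  refine ⟨hanti, h2, h3, ?_⟩
  -- Part 4
  intro γ hγ
  obtain ⟨b, hb1, hb2⟩ := ((eventually_gt_atTop (-L/2)).and (h3.eventually (gt_mem_nhds hγ))).exists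
  have ha' : ∀ᶠ ν in 𝓝[>] (-L/2), γ < p ν ∧ ν ∈ Set.Ioo (-L/2) b := by
    filter_upwards [h2.eventually (eventually_gt_atTop γ),
      Ioo_mem_nhdsGT_of_mem (Set.mem_Ico.mpr ⟨le_refl _, hb1⟩)] with ν h1 h2
    exact ⟨h1, h2⟩
  obtain ⟨a, ha2, ha3⟩ := ha'.exists
  have hab : a ≤ b := le_of_lt ha3.2
  have hsub : Set.Icc a b ⊆ Set.Ioi (-L/2) := fun x hx => lt_of_lt_of_le ha3.1 hx.1
  have hqc : ContinuousOn q (Set.Ioi (-L/2)) := by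
    apply continuousOn_finset_sum
    intro i _
    apply ContinuousOn.div continuousOn_const (by fun_prop)
    intro x hx
    rw [Set.mem_Ioi] at hx
    have := hpos x hx i
    positivity
  have hcont : ContinuousOn p (Set.Icc a b) :=
    (hqc.mono hsub).congr (fun x hx => hpq x (hsub hx))
  obtain ⟨ν, hν1, hν2⟩ := intermediate_value_Icc' hab hcont
    (Set.mem_Icc.mpr ⟨le_of_lt hb2, le_of_lt ha2⟩)
  refine ⟨ν, ⟨lt_of_lt_of_le ha3.1 hν1.1, hν2⟩, ?_⟩
  rintro ν' ⟨hν'1, hν'2⟩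
  exact hanti.injOn hν'1 (hsub hν1) (hν'2.trans hν2.symm)
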